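/- Fix N ≥ 1 and an index i : Fin N. Let U be an open subset of ℂ^N and let H : U → Matrix (Fin N) (Fin N) ℂ be differentiable on U, with (H t)ᵀ * (H t) = 1 (the identity matrix) for every t ∈ U; thus the columns η₁ t, …, η_N t of H t are orthonormal with respect to the bilinear form B x y = ∑ k, (x k) * (y k). Suppose that for every index j ≠ i and every t ∈ U, the i-th partial derivative ∂ᵢ(η j)(t) of the j-th column of H is a scalar multiple of the i-th column η i t. Then for every t ∈ U one has the matrix identity ∂ᵢH(t) = A(t) * H(t), where A(t) is the N × N matrix with entries A(t)ₖₗ = (∂ᵢ(η i)(t))ₖ * (η i t)ₗ − (η i t)ₖ * (∂ᵢ(η i)(t))ₗ (that is, A = u' uᵀ − u u'ᵀ with u the i-th column of H and u' its i-th partial derivative). -/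

import Mathlib

open Matrix

/-- Let `H : ℂ^N → O_N(ℂ)` be differentiable on an open set `U` with
`(H t)ᵀ * H t = 1`, and suppose that for every `j ≠ i` the `i`-th partial derivative of
the `j`-th column of `H` is proportional to the `i`-th column.  Then
`∂ᵢ H (t) = A(t) * H(t)` where `A = u' uᵀ − u u'ᵀ`, `u` being the `i`-th column of `H`
and `u'` its `i`-th partial derivative; i.e. `H` satisfies the ecliptic pde
`∂ᵢ H = (∂ᵢ ηᵢ ∧ ηᵢ) H`. -/
theorem stmt_7 (N : ℕ) (hN : 1 ≤ N) (i : Fin N) (U : Set (Fin N → ℂ)) (hU : IsOpen U)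
    (H : (Fin N → ℂ) → Matrix (Fin N) (Fin N) ℂ)
    (hdiff : ∀ k l : Fin N, DifferentiableOn ℂ (fun t => H t k l) U)
    (horth : ∀ t ∈ U, (H t)ᵀ * H t = 1)
    (hprop : ∀ j : Fin N, j ≠ i → ∀ t ∈ U,
      ∃ c : ℂ, (fun k => lineDeriv ℂ (fun s => H s k j) t (Pi.single i 1)) =
        c • fun k => H t k i) :
    ∀ t ∈ U,
      (Matrix.of fun k l => lineDeriv ℂ (fun s => H s k l) t (Pi.single i 1)) =
        (Matrix.of fun k l =>
            lineDeriv ℂ (fun s => H s k i) t (Pi.single i 1) * H t l i -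
              H t k i * lineDeriv ℂ (fun s => H s l i) t (Pi.single i 1)) * H t := by
  intro t ht
  have hdAt : ∀ k l, DifferentiableAt ℂ (fun s => H s k l) t := fun k l =>
    (hdiff k l).differentiableAt (hU.mem_nhds ht)
  set v : Fin N → ℂ := Pi.single i 1 with hv
  set D : Fin N → Fin N → ℂ := fun k l => lineDeriv ℂ (fun s => H s k l) t v with hD
  -- orthogonality of columns
  have o : ∀ j l : Fin N, ∑ m, H t m j * H t m l = if j = l then 1 else 0 := by
    intro j l
    have := congrFun (congrFun (horth t ht) j) l
    simpa [Matrix.mul_apply, Matrix.transpose_apply, Matrix.one_apply] using this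
  -- derivative of the orthogonality relation
  have key : ∀ j l : Fin N, ∑ m, (D m j * H t m l + H t m j * D m l) = 0 := by
    intro j l
    have h1 : HasFDerivAt (fun s => ∑ m, H s m j * H s m l)
        (∑ m, (H t m l • fderiv ℂ (fun s => H s m j) t
          + H t m j • fderiv ℂ (fun s => H s m l) t)) t := by
      refine HasFDerivAt.fun_sum fun m _ => ?_
      simpa [add_comm] using (hdAt m j).hasFDerivAt.fun_mul (hdAt m l).hasFDerivAt
    have heq : (fun s => ∑ m, H s m j * H s m l)
        =ᶠ[nhds t] fun _ => (1 : Matrix (Fin N) (Fin N) ℂ) j l := by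
      filter_upwards [hU.mem_nhds ht] with s hs
      have := congrFun (congrFun (horth s hs) j) l
      simpa [Matrix.mul_apply, Matrix.transpose_apply] using this
    have h2 : HasFDerivAt (fun s => ∑ m, H s m j * H s m l)
        (0 : (Fin N → ℂ) →L[ℂ] ℂ) t :=
      (hasFDerivAt_const _ _).congr_of_eventuallyEq heq
    have h0 := h1.unique h2
    have := congrArg (fun (L : (Fin N → ℂ) →L[ℂ] ℂ) => L v) h0
    simp only [ContinuousLinearMap.sum_apply, ContinuousLinearMap.add_apply,
      ContinuousLinearMap.smul_apply, ContinuousLinearMap.zero_apply] at this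
    have hldf : ∀ k l : Fin N, D k l = fderiv ℂ (fun s => H s k l) t v := fun k l =>
      (hdAt k l).lineDeriv_eq_fderiv
    rw [← this]
    apply Finset.sum_congr rfl
    intro m _
    rw [hldf m j, hldf m l]
    simp [smul_eq_mul]
    ring
  -- componentwise goal
  ext k l
  simp only [Matrix.of_apply, Matrix.mul_apply]
  show D k l = ∑ m, (D k i * H t m i - H t k i * D m i) * H t m l
  have expand : ∑ m, (D k i * H t m i - H t k i * D m i) * H t m l
      = D k i * (∑ m, H t m i * H t m l) - H t k i * ∑ m, D m i * H t m l := by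
    rw [Finset.mul_sum, Finset.mul_sum, ← Finset.sum_sub_distrib]
    apply Finset.sum_congr rfl; intro m _; ring
  have skew : ∑ m, D m i * H t m l = - ∑ m, H t m i * D m l := by
    have h := key i l
    rw [Finset.sum_add_distrib] at h
    exact eq_neg_of_add_eq_zero_left h
  by_cases hl : l = i
  · subst hl
    have hS : ∑ m, D m l * H t m l = 0 := by
      have h := key l l
      have h2 : ∑ m, (D m l * H t m l + H t m l * D m l)
          = 2 * ∑ m, D m l * H t m l := by
        rw [Finset.mul_sum]
        apply Finset.sum_congr rfl
        intro m _
        ring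
      rw [h2] at h
      have := mul_eq_zero.mp h
      simpa using this
    rw [expand, o l l, hS]
    simp
  · obtain ⟨c, hc⟩ := hprop l hl t ht
    have hc' : ∀ m, D m l = c * H t m i := by
      intro m
      have := congrFun hc m
      simpa [hD, hv] using this
    have hsum : ∑ m, H t m i * D m l = c := by
      calc ∑ m, H t m i * D m l = ∑ m, c * (H t m i * H t m i) := by
            apply Finset.sum_congr rfl
            intro m _
            rw [hc' m]; ring
        _ = c * ∑ m, H t m i * H t m i := by rw [Finset.mul_sum]
        _ = c := by rw [o i i]; simp
    have hol : ∑ m, H t m i * H t m l = 0 := by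
      rw [o i l]
      simp [Ne.symm hl]
    rw [expand, hol, skew, hsum, hc' k]
    ring
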